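/- Let X be a finite set of pairwise distinct admissible parameters and Y a finite multiset of admissible parameters with |X| ≥ |Y|. Then Σ_{ξ∈X} Γ_ξ(Y, X) · τ[X\{ξ}] · σ[ξY] = σ[X] · τ[Y] − δ_{|X|, |Y|} · τ[X] · σ[Y], where ξY is Y with ξ adjoined and δ is the Kronecker delta. -/

import Mathlib

open Matrix

noncomputable section

/-- The diagonal matrix `∏_{ξ ∈ X} (diagonal d − ξ·1)` for a multiset `X` of parameters. -/
def sProd {n : ℕ} (d : Fin n → ℂ) (X : Multiset ℂ) : Matrix (Fin n) (Fin n) ℂ :=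
  Matrix.diagonal fun i => (X.map fun ξ => d i - ξ).prod

/-- The multiset-shifted matrix `A[X] = A·∏_{ξ∈X}(R−ξ)⁻¹`. -/
def shA {n : ℕ} (r : Fin n → ℂ) (A : Matrix (Fin n) (Fin n) ℂ) (X : Multiset ℂ) :
    Matrix (Fin n) (Fin n) ℂ :=
  A * (sProd r X)⁻¹

/-- The multiset-shifted matrix `B[X] = B·∏_{ξ∈X}(L−ξ)`. -/
def shB {n : ℕ} (l : Fin n → ℂ) (B : Matrix (Fin n) (Fin n) ℂ) (X : Multiset ℂ) :
    Matrix (Fin n) (Fin n) ℂ :=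
  B * sProd l X

/-- The shifted tau-function `τ[X] = det(1 + A[X] B[X])`. -/
def shtau {n : ℕ} (l r : Fin n → ℂ) (A B : Matrix (Fin n) (Fin n) ℂ) (X : Multiset ℂ) : ℂ :=
  (1 + shA r A X * shB l B X).det

/-- The shifted tau-function `σ[X] = τ[X]·⟨a[X]|(1+B[X]A[X])⁻¹|β⟩`. -/
def shsigma {n : ℕ} (l r a β : Fin n → ℂ) (A B : Matrix (Fin n) (Fin n) ℂ)
    (X : Multiset ℂ) : ℂ :=
  shtau l r A B X *
    (Matrix.vecMul (Matrix.vecMul a (sProd r X)⁻¹) (1 + shB l B X * shA r A X)⁻¹ ⬝ᵥ β)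

/-- The shifted tau-function `ρ[X] = τ[X]·⟨b[X]|(1+A[X]B[X])⁻¹|α⟩`. -/
def shrho {n : ℕ} (l r b α : Fin n → ℂ) (A B : Matrix (Fin n) (Fin n) ℂ)
    (X : Multiset ℂ) : ℂ :=
  shtau l r A B X *
    (Matrix.vecMul (Matrix.vecMul b (sProd l X)) (1 + shA r A X * shB l B X)⁻¹ ⬝ᵥ α)

/-- A parameter `ξ` is admissible if `R − ξ·1` and `L − ξ·1` are invertible. -/
def Adm {n : ℕ} (l r : Fin n → ℂ) (ξ : ℂ) : Prop :=
  IsUnit (Matrix.diagonal r - ξ • (1 : Matrix (Fin n) (Fin n) ℂ)) ∧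
    IsUnit (Matrix.diagonal l - ξ • (1 : Matrix (Fin n) (Fin n) ℂ))

/-- `Γ_ξ(Y, X) = ∏_{η∈Y}(ξ−η) / ∏_{η∈X, η≠ξ}(ξ−η)`. -/
def Gam (Y : Multiset ℂ) (X : Finset ℂ) (ξ : ℂ) : ℂ :=
  (Y.map fun η => ξ - η).prod / ∏ η ∈ X.erase ξ, (ξ - η)

namespace S15

/-- `pp Z t = ∏_{η ∈ Z} (t - η)`. -/
def pp (Z : Multiset ℂ) (t : ℂ) : ℂ := (Z.map fun ξ => t - ξ).prod

lemma pp_cons (ξ : ℂ) (Z : Multiset ℂ) (t : ℂ) : pp (ξ ::ₘ Z) t = (t - ξ) * pp Z t := by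
  simp [pp]

lemma pp_ne_zero {Z : Multiset ℂ} {t : ℂ} (h : ∀ ξ ∈ Z, t - ξ ≠ 0) : pp Z t ≠ 0 := by
  refine Multiset.prod_ne_zero ?_
  simp only [Multiset.mem_map, not_exists]
  rintro x ⟨hx, hx0⟩
  exact h x hx hx0

variable {n : ℕ}

lemma sProd_eq (d : Fin n → ℂ) (Z : Multiset ℂ) :
    sProd d Z = Matrix.diagonal fun i => pp Z (d i) := rfl

lemma diag_sub_smul_one (d : Fin n → ℂ) (ξ : ℂ) :
    Matrix.diagonal d - ξ • (1 : Matrix (Fin n) (Fin n) ℂ)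
      = Matrix.diagonal (fun i => d i - ξ) := by
  ext i j
  by_cases h : i = j
  · subst h; simp [Matrix.one_apply]
  · simp [Matrix.diagonal_apply_ne _ h, Matrix.one_apply_ne h]

lemma sProd_cons (d : Fin n → ℂ) (ξ : ℂ) (Z : Multiset ℂ) :
    sProd d (ξ ::ₘ Z) = Matrix.diagonal (fun i => d i - ξ) * sProd d Z := by
  rw [sProd_eq, sProd_eq, Matrix.diagonal_mul_diagonal]
  congr 1
  funext i
  simp [pp_cons]

lemma det_sProd (d : Fin n → ℂ) (Z : Multiset ℂ) :
    (sProd d Z).det = ∏ i, pp Z (d i) := by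
  rw [sProd_eq, Matrix.det_diagonal]

lemma Adm.r_sub_ne {l r : Fin n → ℂ} {ξ : ℂ} (h : Adm l r ξ) (i : Fin n) : r i - ξ ≠ 0 := by
  have h1 := h.1
  rw [diag_sub_smul_one, Matrix.isUnit_iff_isUnit_det, Matrix.det_diagonal,
    isUnit_iff_ne_zero] at h1
  intro h0
  exact h1 (Finset.prod_eq_zero (Finset.mem_univ i) h0)

lemma Adm.l_sub_ne {l r : Fin n → ℂ} {ξ : ℂ} (h : Adm l r ξ) (i : Fin n) : l i - ξ ≠ 0 := by
  have h1 := h.2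
  rw [diag_sub_smul_one, Matrix.isUnit_iff_isUnit_det, Matrix.det_diagonal,
    isUnit_iff_ne_zero] at h1
  intro h0
  exact h1 (Finset.prod_eq_zero (Finset.mem_univ i) h0)

lemma isUnit_det_sProd {d : Fin n → ℂ} {Z : Multiset ℂ}
    (h : ∀ i, pp Z (d i) ≠ 0) : IsUnit (sProd d Z).det := by
  rw [det_sProd, isUnit_iff_ne_zero]
  exact Finset.prod_ne_zero_iff.mpr fun i _ => h i

lemma inv_diag {f : Fin n → ℂ} (hf : ∀ i, f i ≠ 0) :
    (Matrix.diagonal f)⁻¹ = Matrix.diagonal (fun i => (f i)⁻¹) := by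
  apply Matrix.inv_eq_right_inv
  rw [Matrix.diagonal_mul_diagonal]
  have : (fun i => f i * (f i)⁻¹) = fun _ => (1 : ℂ) := funext fun i => mul_inv_cancel₀ (hf i)
  rw [this, Matrix.diagonal_one]

lemma vecMulVec_mul (x u : Fin n → ℂ) (M : Matrix (Fin n) (Fin n) ℂ) :
    Matrix.vecMulVec x u * M = Matrix.vecMulVec x (u ᵥ* M) := by
  ext i j
  simp only [Matrix.mul_apply, Matrix.vecMulVec_apply, Matrix.vecMul, dotProduct,
    Finset.mul_sum]
  exact Finset.sum_congr rfl fun k _ => by ring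

lemma vecMulVec_mulVec (x u z : Fin n → ℂ) :
    Matrix.vecMulVec x u *ᵥ z = (u ⬝ᵥ z) • x := by
  ext i
  simp only [Matrix.mulVec, Matrix.vecMulVec_apply, dotProduct, Pi.smul_apply,
    smul_eq_mul, Finset.sum_mul, Finset.mul_sum]
  exact Finset.sum_congr rfl fun k _ => by ring

lemma neg_vecMulVec (x u : Fin n → ℂ) :
    Matrix.vecMulVec (-x) u = -Matrix.vecMulVec x u := by
  ext i j
  simp [Matrix.vecMulVec_apply]

lemma det_add_vecMulVec {C : Matrix (Fin n) (Fin n) ℂ} (hC : IsUnit C.det)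
    (x u : Fin n → ℂ) :
    (C + Matrix.vecMulVec x u).det = C.det * (1 + u ᵥ* C⁻¹ ⬝ᵥ x) := by
  rw [Matrix.vecMulVec_eq Unit, Matrix.det_add_replicateCol_mul_replicateRow hC]
  congr 1
  rw [Matrix.det_unique, Matrix.add_apply, Matrix.one_apply_eq,
    ← Matrix.replicateRow_vecMul, Matrix.replicateRow_mul_replicateCol_apply]


variable {l r a β b : Fin n → ℂ} {A B : Matrix (Fin n) (Fin n) ℂ} {Z : Multiset ℂ}

/-- The master matrix `M(Z) = P_Z + B Q_Z A`. -/
def Mc (l r : Fin n → ℂ) (A B : Matrix (Fin n) (Fin n) ℂ) (Z : Multiset ℂ) :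
    Matrix (Fin n) (Fin n) ℂ :=
  sProd r Z + B * sProd l Z * A

lemma one_add_shB_shA (hP : IsUnit (sProd r Z).det) :
    1 + shB l B Z * shA r A Z = Mc l r A B Z * (sProd r Z)⁻¹ := by
  rw [shB, shA, Mc, Matrix.add_mul, Matrix.mul_nonsing_inv _ hP]
  simp only [mul_assoc]

lemma Mc_det (hP : IsUnit (sProd r Z).det) :
    (Mc l r A B Z).det = shtau l r A B Z * (sProd r Z).det := by
  have h2 := one_add_shB_shA (l := l) (r := r) (A := A) (B := B) (Z := Z) hP
  have hd : (sProd r Z).det ≠ 0 := by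
    simpa [isUnit_iff_ne_zero] using hP
  calc (Mc l r A B Z).det
      = (Mc l r A B Z * (sProd r Z)⁻¹).det * (sProd r Z).det := by
        rw [Matrix.det_mul, Matrix.det_nonsing_inv, Ring.inverse_eq_inv']
        field_simp
    _ = (1 + shB l B Z * shA r A Z).det * (sProd r Z).det := by rw [h2]
    _ = shtau l r A B Z * (sProd r Z).det := by
        rw [shtau, Matrix.det_one_add_mul_comm]

lemma Mc_isUnit (hP : IsUnit (sProd r Z).det)
    (hi : IsUnit (1 + shA r A Z * shB l B Z)) : IsUnit (Mc l r A B Z).det := by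
  rw [Mc_det hP]
  exact ((Matrix.isUnit_iff_isUnit_det _).mp hi).mul hP

lemma shsigma_eq (hP : IsUnit (sProd r Z).det) :
    shsigma l r a β A B Z = shtau l r A B Z * (a ᵥ* (Mc l r A B Z)⁻¹ ⬝ᵥ β) := by
  rw [shsigma, one_add_shB_shA (A := A) hP, Matrix.mul_inv_rev,
    Matrix.nonsing_inv_nonsing_inv _ hP, Matrix.vecMul_vecMul, ← Matrix.mul_assoc,
    Matrix.nonsing_inv_mul _ hP, Matrix.one_mul]

lemma Mc_cons (hB : Matrix.diagonal r * B - B * Matrix.diagonal l = Matrix.vecMulVec β b)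
    (ξ : ℂ) (Z : Multiset ℂ) :
    Matrix.diagonal (fun i => r i - ξ) * Mc l r A B Z
      = Mc l r A B (ξ ::ₘ Z) + Matrix.vecMulVec β (b ᵥ* (sProd l Z * A)) := by
  have hRB : Matrix.diagonal (fun i => r i - ξ) * B
      = B * Matrix.diagonal (fun i => l i - ξ) + Matrix.vecMulVec β b := by
    rw [← diag_sub_smul_one, ← diag_sub_smul_one, sub_mul, mul_sub, Matrix.smul_mul,
      Matrix.mul_smul, one_mul, mul_one, ← hB]
    abel
  rw [Mc, Mc, sProd_cons, sProd_cons, Matrix.mul_add, add_assoc]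
  congr 1
  rw [← Matrix.mul_assoc, ← Matrix.mul_assoc, hRB, Matrix.add_mul, Matrix.add_mul,
    vecMulVec_mul, vecMulVec_mul]
  simp only [mul_assoc, Matrix.vecMul_vecMul]

lemma sm_vec {C E : Matrix (Fin n) (Fin n) ℂ} (hC : IsUnit C.det) (hE : IsUnit E.det)
    {u x : Fin n → ℂ} (hEC : E + Matrix.vecMulVec x u = C) :
    E.det • (E⁻¹ *ᵥ x) = C.det • (C⁻¹ *ᵥ x) := by
  set z := C⁻¹ *ᵥ x with hz
  have hCz : C *ᵥ z = x := by
    rw [hz, Matrix.mulVec_mulVec, Matrix.mul_nonsing_inv _ hC, Matrix.one_mulVec]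
  have hEeq : E = C - Matrix.vecMulVec x u := by rw [← hEC]; abel
  have hEz : E *ᵥ z = (1 - u ⬝ᵥ z) • x := by
    rw [hEeq, Matrix.sub_mulVec, hCz, vecMulVec_mulVec, sub_smul, one_smul]
  have hdet : E.det = C.det * (1 - u ⬝ᵥ z) := by
    have h2 : E = C + Matrix.vecMulVec (-x) u := by rw [neg_vecMulVec, ← hEC]; abel
    rw [h2, det_add_vecMulVec hC, ← Matrix.dotProduct_mulVec, Matrix.mulVec_neg,
      dotProduct_neg, ← sub_eq_add_neg, ← hz]
  have h3 : E⁻¹ *ᵥ (E *ᵥ z) = z := by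
    rw [Matrix.mulVec_mulVec, Matrix.nonsing_inv_mul _ hE, Matrix.one_mulVec]
  have h4 : (1 - u ⬝ᵥ z) • (E⁻¹ *ᵥ x) = z := by
    conv_rhs => rw [← h3, hEz, Matrix.mulVec_smul]
  calc E.det • (E⁻¹ *ᵥ x) = C.det • ((1 - u ⬝ᵥ z) • (E⁻¹ *ᵥ x)) := by
        rw [hdet, mul_smul]
    _ = C.det • z := by rw [h4]

open Polynomial in
lemma L1 (X : Finset ℂ) (Y : Multiset ℂ) (hcard : Y.card ≤ X.card) (c : ℂ)
    (hc : ∀ ξ ∈ X, c - ξ ≠ 0) :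
    ∑ ξ ∈ X, pp Y ξ * (∏ η ∈ X.erase ξ, (ξ - η))⁻¹ * (c - ξ)⁻¹
      = pp Y c * (pp X.val c)⁻¹ - (if X.card = Y.card then 1 else 0) := by
  classical
  set δ : ℂ := if X.card = Y.card then 1 else 0 with hδ
  set p : ℂ[X] := (Y.map fun η => Polynomial.X - C η).prod with hp
  set q : ℂ[X] := (X.val.map fun η => Polynomial.X - C η).prod with hq
  have hpm : p.Monic := monic_multiset_prod_of_monic _ _ fun η _ => monic_X_sub_C η
  have hqm : q.Monic := monic_multiset_prod_of_monic _ _ fun η _ => monic_X_sub_C η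
  have hdeg : ∀ (T : Multiset ℂ),
      ((T.map fun η => Polynomial.X - C η).prod).natDegree = T.card := by
    intro T
    rw [natDegree_multiset_prod_of_monic (t := T.map fun η => Polynomial.X - C η) (by
      intro f hf
      obtain ⟨η, _, rfl⟩ := Multiset.mem_map.mp hf
      exact monic_X_sub_C η), Multiset.map_map]
    have : (T.map (Polynomial.natDegree ∘ fun η => Polynomial.X - C η)) = T.map fun _ => 1 :=
      Multiset.map_congr rfl fun x _ => natDegree_X_sub_C x
    simp only [this, Multiset.map_const', Multiset.sum_replicate, smul_eq_mul, mul_one]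
  have hpd : p.natDegree = Y.card := hdeg Y
  have hqd : q.natDegree = X.card := by rw [hq, hdeg X.val]; rfl
  have hev : ∀ (T : Multiset ℂ) (t : ℂ),
      eval t ((T.map fun η => Polynomial.X - C η).prod) = pp T t := by
    intro T t
    rw [eval_multiset_prod, Multiset.map_map, pp]
    congr 1
    exact Multiset.map_congr rfl fun x _ => by simp
  set f : ℂ[X] := p - C δ * q with hf
  have hdf : f.degree < (X.card : WithBot ℕ) := by
    by_cases hd : X.card = Y.card
    · have hδ1 : δ = 1 := by rw [hδ, if_pos hd]
      have hfpq : f = p - q := by rw [hf, hδ1, Polynomial.C_1, one_mul]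
      rw [hfpq]
      have hdp : p.degree = (X.card : WithBot ℕ) := by
        rw [degree_eq_natDegree hpm.ne_zero, hpd, hd]
      have hdpq : p.degree = q.degree := by
        rw [hdp, degree_eq_natDegree hqm.ne_zero, hqd]
      calc (p - q).degree < p.degree := by
            refine degree_sub_lt hdpq hpm.ne_zero ?_
            rw [hpm.leadingCoeff, hqm.leadingCoeff]
        _ ≤ (X.card : WithBot ℕ) := le_of_eq hdp
    · have hδ0 : δ = 0 := by rw [hδ, if_neg hd]
      have hfp : f = p := by rw [hf, hδ0, Polynomial.C_0, zero_mul, sub_zero]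
      rw [hfp]
      calc p.degree ≤ (p.natDegree : WithBot ℕ) := degree_le_natDegree
        _ < (X.card : WithBot ℕ) := by
            rw [hpd]
            exact_mod_cast lt_of_le_of_ne hcard fun h => hd h.symm
  have hinterp := Lagrange.eq_interpolate (s := X) (v := id) (Set.injOn_id _) hdf
  have hevc := congrArg (eval c) hinterp
  rw [Lagrange.interpolate_apply, eval_finset_sum] at hevc
  have hXne : pp X.val c ≠ 0 := by
    refine pp_ne_zero ?_
    intro ξ hξ
    exact hc ξ hξ
  have hbasis : ∀ ξ ∈ X, eval c (C (f.eval (id ξ)) * Lagrange.basis X id ξ)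
      = pp Y ξ * ((∏ η ∈ X.erase ξ, (ξ - η))⁻¹ * (pp X.val c * (c - ξ)⁻¹)) := by
    intro ξ hξ
    have hfξ : f.eval ξ = pp Y ξ := by
      rw [hf, eval_sub, eval_mul, eval_C, hp, hev, hq, hev]
      have : pp X.val ξ = 0 := by
        refine Multiset.prod_eq_zero ?_
        exact Multiset.mem_map.mpr ⟨ξ, hξ, sub_self ξ⟩
      rw [this, mul_zero, sub_zero]
    have hbv : eval c (Lagrange.basis X id ξ)
        = (∏ η ∈ X.erase ξ, (ξ - η))⁻¹ * ∏ η ∈ X.erase ξ, (c - η) := by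
      rw [Lagrange.basis, eval_prod, ← Finset.prod_inv_distrib, ← Finset.prod_mul_distrib]
      refine Finset.prod_congr rfl ?_
      intro η hη
      rw [Lagrange.basisDivisor, eval_mul, eval_C, eval_sub, eval_X, eval_C]
      rfl
    have herase : ∏ η ∈ X.erase ξ, (c - η) = pp X.val c * (c - ξ)⁻¹ := by
      have h1 : (c - ξ) * ∏ η ∈ X.erase ξ, (c - η) = pp X.val c := by
        rw [Finset.mul_prod_erase _ _ hξ, Finset.prod_eq_multiset_prod]; rfl
      rw [← h1, mul_comm (c - ξ), mul_assoc, mul_inv_cancel₀ (hc ξ hξ), mul_one]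
    rw [eval_mul, eval_C]
    simp only [id_eq]
    rw [hfξ, hbv, herase]
  rw [Finset.sum_congr rfl hbasis] at hevc
  have hfc : eval c f = pp Y c - δ * pp X.val c := by
    rw [hf, eval_sub, eval_mul, eval_C, hp, hev, hq, hev]
  rw [hfc] at hevc
  have hgoal : (∑ ξ ∈ X, pp Y ξ * (∏ η ∈ X.erase ξ, (ξ - η))⁻¹ * (c - ξ)⁻¹) * pp X.val c
      = pp Y c - δ * pp X.val c := by
    rw [Finset.sum_mul, hevc]
    refine Finset.sum_congr rfl ?_
    intro ξ hξ
    ring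
  have h2 := congrArg (fun t => t * (pp X.val c)⁻¹) hgoal
  rw [mul_assoc, mul_inv_cancel₀ hXne, mul_one] at h2
  rw [h2, sub_mul, mul_assoc, mul_inv_cancel₀ hXne, mul_one]

lemma L2 (X : Finset ℂ) (Y : Multiset ℂ) (hcard : Y.card ≤ X.card) (c c' : ℂ)
    (hc : ∀ ξ ∈ X, c - ξ ≠ 0) (hc' : ∀ ξ ∈ X, c' - ξ ≠ 0) (hcc' : c' - c ≠ 0) :
    ∑ ξ ∈ X, pp Y ξ * (∏ η ∈ X.erase ξ, (ξ - η))⁻¹ * ((c' - ξ)⁻¹ * (c - ξ)⁻¹)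
      = (pp Y c * (pp X.val c)⁻¹ - pp Y c' * (pp X.val c')⁻¹) * (c' - c)⁻¹ := by
  have h1 := L1 X Y hcard c hc
  have h2 := L1 X Y hcard c' hc'
  have key : ∀ ξ ∈ X, pp Y ξ * (∏ η ∈ X.erase ξ, (ξ - η))⁻¹ * ((c' - ξ)⁻¹ * (c - ξ)⁻¹)
      = (pp Y ξ * (∏ η ∈ X.erase ξ, (ξ - η))⁻¹ * (c - ξ)⁻¹
          - pp Y ξ * (∏ η ∈ X.erase ξ, (ξ - η))⁻¹ * (c' - ξ)⁻¹) * (c' - c)⁻¹ := by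
    intro ξ hξ
    have h3 : c - ξ ≠ 0 := hc ξ hξ
    have h4 : c' - ξ ≠ 0 := hc' ξ hξ
    have hx : (c' - ξ)⁻¹ * (c - ξ)⁻¹ = ((c - ξ)⁻¹ - (c' - ξ)⁻¹) * (c' - c)⁻¹ := by
      field_simp
      ring
    rw [hx]
    ring
  rw [Finset.sum_congr rfl key, ← Finset.sum_mul, Finset.sum_sub_distrib, h1, h2]
  ring

end S15

/-- for |X| ≥ |Y|,
`Σ_{ξ∈X} Γ_ξ(Y,X)·τ[X\{ξ}]·σ[ξY] = σ[X]·τ[Y] − δ_{|X|,|Y|}·τ[X]·σ[Y]`. -/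
theorem statement15 {n : ℕ} (hn : 1 ≤ n) (l r : Fin n → ℂ)
    (hlr : ∀ j k, l j ≠ r k) (α β a b : Fin n → ℂ)
    (A B : Matrix (Fin n) (Fin n) ℂ)
    (hA : Matrix.diagonal l * A - A * Matrix.diagonal r = Matrix.vecMulVec α a)
    (hB : Matrix.diagonal r * B - B * Matrix.diagonal l = Matrix.vecMulVec β b)
    (X : Finset ℂ) (Y : Multiset ℂ)
    (hXadm : ∀ ξ ∈ X, Adm l r ξ) (hYadm : ∀ ξ ∈ Y, Adm l r ξ)
    (hcard : Y.card ≤ X.card)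
    (hiX : IsUnit (1 + shA r A X.val * shB l B X.val))
    (hiY : IsUnit (1 + shA r A Y * shB l B Y))
    (hi1 : ∀ ξ ∈ X, IsUnit (1 + shA r A (X.erase ξ).val * shB l B (X.erase ξ).val))
    (hi2 : ∀ ξ ∈ X, IsUnit (1 + shA r A (ξ ::ₘ Y) * shB l B (ξ ::ₘ Y))) :
    (∑ ξ ∈ X, Gam Y X ξ * shtau l r A B (X.erase ξ).val * shsigma l r a β A B (ξ ::ₘ Y))
      = shsigma l r a β A B X.val * shtau l r A B Y
        - (if X.card = Y.card then (1 : ℂ) else 0)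
          * shtau l r A B X.val * shsigma l r a β A B Y := by
  classical
  -- basic nonvanishing facts
  have hrXf : ∀ ξ ∈ X, ∀ i, r i - ξ ≠ 0 := fun ξ hξ i => S15.Adm.r_sub_ne (hXadm ξ hξ) i
  have hlXf : ∀ ξ ∈ X, ∀ i, l i - ξ ≠ 0 := fun ξ hξ i => S15.Adm.l_sub_ne (hXadm ξ hξ) i
  have hrY : ∀ ξ ∈ Y, ∀ i, r i - ξ ≠ 0 := fun ξ hξ i => S15.Adm.r_sub_ne (hYadm ξ hξ) i
  have hppXr : ∀ i, S15.pp X.val (r i) ≠ 0 := fun i =>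
    S15.pp_ne_zero fun ξ hξ => hrXf ξ hξ i
  have hppXl : ∀ i, S15.pp X.val (l i) ≠ 0 := fun i =>
    S15.pp_ne_zero fun ξ hξ => hlXf ξ hξ i
  have hppYr : ∀ i, S15.pp Y (r i) ≠ 0 := fun i => S15.pp_ne_zero fun ξ hξ => hrY ξ hξ i
  have hPX : IsUnit (sProd r X.val).det := S15.isUnit_det_sProd hppXr
  have hPY : IsUnit (sProd r Y).det := S15.isUnit_det_sProd hppYr
  have hdPX : (sProd r X.val).det ≠ 0 := isUnit_iff_ne_zero.mp hPX
  have hdPY : (sProd r Y).det ≠ 0 := isUnit_iff_ne_zero.mp hPY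
  set MX := S15.Mc l r A B X.val with hMXdef
  set MY := S15.Mc l r A B Y with hMYdef
  have hMXu : IsUnit MX.det := S15.Mc_isUnit hPX hiX
  have hMYu : IsUnit MY.det := S15.Mc_isUnit hPY hiY
  set DX := MX.det with hDX
  set DY := MY.det with hDY
  set w : Fin n → ℂ := DX • (MX⁻¹ *ᵥ β) with hww
  set aY : Fin n → ℂ := a ᵥ* MY⁻¹ with haY
  set gg : Fin n → ℂ := fun m => b m * S15.pp X.val (l m) * (A *ᵥ w) m with hgg
  set dd : ℂ := if X.card = Multiset.card Y then (1 : ℂ) else 0 with hdd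
  set GG : ℂ → ℂ := fun ξ => ∑ m, gg m * (l m - ξ)⁻¹ with hGG
  set SS : ℂ → ℂ := fun ξ => ∑ i, aY i * ((r i - ξ)⁻¹ * β i) with hSS
  -- M_X *ᵥ w = DX • β
  have hMXw : MX *ᵥ w = DX • β := by
    rw [hww, Matrix.mulVec_smul, Matrix.mulVec_mulVec, Matrix.mul_nonsing_inv _ hMXu,
      Matrix.one_mulVec]
  -- (E1) componentwise
  have hE1 : ∀ i, ∑ m, B i m * (S15.pp X.val (l m) * (A *ᵥ w) m)
      = DX * β i - S15.pp X.val (r i) * w i := by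
    intro i
    have hMc : MX = sProd r X.val + B * sProd l X.val * A := rfl
    have h0 : (sProd r X.val + B * sProd l X.val * A) *ᵥ w = DX • β := by
      rw [← hMc]; exact hMXw
    rw [Matrix.add_mulVec] at h0
    have h0i := congrFun h0 i
    simp only [Pi.add_apply, Pi.smul_apply, smul_eq_mul] at h0i
    have h1 : ((B * sProd l X.val * A) *ᵥ w) i
        = ∑ m, B i m * (S15.pp X.val (l m) * (A *ᵥ w) m) := by
      rw [Matrix.mul_assoc, ← Matrix.mulVec_mulVec, ← Matrix.mulVec_mulVec]
      show ∑ m, B i m * ((sProd l X.val *ᵥ (A *ᵥ w)) m) = _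
      refine Finset.sum_congr rfl fun m _ => ?_
      rw [S15.sProd_eq, Matrix.mulVec_diagonal]
    have h2 : (sProd r X.val *ᵥ w) i = S15.pp X.val (r i) * w i := by
      rw [S15.sProd_eq, Matrix.mulVec_diagonal]
    rw [h1, h2] at h0i
    linear_combination h0i
  -- per-ξ step
  have hstep : ∀ ξ ∈ X,
      Gam Y X ξ * shtau l r A B (X.erase ξ).val * shsigma l r a β A B (ξ ::ₘ Y)
          * ((sProd r X.val).det * (sProd r Y).det)
        = Gam Y X ξ * ((DX + GG ξ) * (DY * SS ξ)) := by
    intro ξ hξ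
    have hmemv : ξ ∈ X.val := hξ
    have hrξ : ∀ i, r i - ξ ≠ 0 := fun i => hrXf ξ hξ i
    have hlξ : ∀ i, l i - ξ ≠ 0 := fun i => hlXf ξ hξ i
    have hcons : ξ ::ₘ (X.erase ξ).val = X.val := by
      rw [Finset.erase_val]
      exact Multiset.cons_erase hmemv
    have hppe : ∀ t, (t - ξ) * S15.pp (X.erase ξ).val t = S15.pp X.val t := by
      intro t
      conv_rhs => rw [← hcons, S15.pp_cons]
    have hPXe : IsUnit (sProd r (X.erase ξ).val).det := by
      refine S15.isUnit_det_sProd fun i => S15.pp_ne_zero fun η hη => ?_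
      exact hrXf η (Finset.mem_of_mem_erase hη) i
    have hlam : (Matrix.diagonal fun i => r i - ξ).det ≠ 0 := by
      rw [Matrix.det_diagonal]
      exact Finset.prod_ne_zero_iff.mpr fun i _ => hrξ i
    -- tau-erase formula
    have hMe := S15.Mc_cons (A := A) hB ξ (X.erase ξ).val
    rw [hcons] at hMe
    have hu'w : (b ᵥ* (sProd l (X.erase ξ).val * A)) ⬝ᵥ w
        = DX * ((b ᵥ* (sProd l (X.erase ξ).val * A)) ᵥ* MX⁻¹ ⬝ᵥ β) := by
      rw [hww, dotProduct_smul, smul_eq_mul, Matrix.dotProduct_mulVec]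
    have hdet1 : (Matrix.diagonal fun i => r i - ξ).det * (S15.Mc l r A B (X.erase ξ).val).det
        = DX + (b ᵥ* (sProd l (X.erase ξ).val * A)) ⬝ᵥ w := by
      rw [← Matrix.det_mul, hMe, S15.det_add_vecMulVec hMXu, mul_add, mul_one, hu'w, hDX, hMXdef]
    have hu'sum : (b ᵥ* (sProd l (X.erase ξ).val * A)) ⬝ᵥ w = GG ξ := by
      have h1 : (b ᵥ* (sProd l (X.erase ξ).val * A)) ⬝ᵥ w
          = (b ᵥ* sProd l (X.erase ξ).val) ⬝ᵥ (A *ᵥ w) := by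
        rw [← Matrix.vecMul_vecMul, Matrix.dotProduct_mulVec]
      rw [h1, hGG]
      show ∑ m, (b ᵥ* sProd l (X.erase ξ).val) m * (A *ᵥ w) m = _
      refine Finset.sum_congr rfl fun m _ => ?_
      have h2 : S15.pp (X.erase ξ).val (l m) = S15.pp X.val (l m) * (l m - ξ)⁻¹ := by
        rw [← hppe (l m), mul_comm (l m - ξ), mul_assoc, mul_inv_cancel₀ (hlξ m), mul_one]
      rw [S15.sProd_eq, Matrix.vecMul_diagonal, h2, hgg]
      ring
    have hA' : shtau l r A B (X.erase ξ).val * (sProd r X.val).det = DX + GG ξ := by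
      have hPfac : (sProd r X.val).det
          = (Matrix.diagonal fun i => r i - ξ).det * (sProd r (X.erase ξ).val).det := by
        conv_lhs => rw [← hcons, S15.sProd_cons, Matrix.det_mul]
      calc shtau l r A B (X.erase ξ).val * (sProd r X.val).det
          = (Matrix.diagonal fun i => r i - ξ).det
              * (shtau l r A B (X.erase ξ).val * (sProd r (X.erase ξ).val).det) := by
            rw [hPfac]; ring
        _ = (Matrix.diagonal fun i => r i - ξ).det * (S15.Mc l r A B (X.erase ξ).val).det := by
            rw [← S15.Mc_det hPXe]
        _ = DX + (b ᵥ* (sProd l (X.erase ξ).val * A)) ⬝ᵥ w := hdet1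
        _ = DX + GG ξ := by rw [hu'sum]
    -- sigma-cons formula
    have hppc : ∀ i, S15.pp (ξ ::ₘ Y) (r i) ≠ 0 := fun i => by
      rw [S15.pp_cons]
      exact mul_ne_zero (hrξ i) (hppYr i)
    have hPc : IsUnit (sProd r (ξ ::ₘ Y)).det := S15.isUnit_det_sProd hppc
    have hMcu : IsUnit (S15.Mc l r A B (ξ ::ₘ Y)).det := S15.Mc_isUnit hPc (hi2 ξ hξ)
    have hCu : IsUnit ((Matrix.diagonal fun i => r i - ξ) * MY).det := by
      rw [Matrix.det_mul]
      exact (isUnit_iff_ne_zero.mpr hlam).mul hMYu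
    have hMc2 := S15.Mc_cons (A := A) hB ξ Y
    have hsm := S15.sm_vec hCu hMcu hMc2.symm
    have hRinv : (Matrix.diagonal fun i => r i - ξ)⁻¹
        = Matrix.diagonal fun i => (r i - ξ)⁻¹ := S15.inv_diag hrξ
    have hB'' : shsigma l r a β A B (ξ ::ₘ Y) * (sProd r Y).det = DY * SS ξ := by
      have hstep2 : shsigma l r a β A B (ξ ::ₘ Y) * (sProd r (ξ ::ₘ Y)).det
          = (Matrix.diagonal fun i => r i - ξ).det * (DY * SS ξ) := by
        rw [S15.shsigma_eq hPc]
        calc shtau l r A B (ξ ::ₘ Y) * (a ᵥ* (S15.Mc l r A B (ξ ::ₘ Y))⁻¹ ⬝ᵥ β)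
              * (sProd r (ξ ::ₘ Y)).det
            = (shtau l r A B (ξ ::ₘ Y) * (sProd r (ξ ::ₘ Y)).det)
                * (a ᵥ* (S15.Mc l r A B (ξ ::ₘ Y))⁻¹ ⬝ᵥ β) := by ring
          _ = (S15.Mc l r A B (ξ ::ₘ Y)).det
                * (a ᵥ* (S15.Mc l r A B (ξ ::ₘ Y))⁻¹ ⬝ᵥ β) := by rw [← S15.Mc_det hPc]
          _ = a ⬝ᵥ ((S15.Mc l r A B (ξ ::ₘ Y)).det • ((S15.Mc l r A B (ξ ::ₘ Y))⁻¹ *ᵥ β)) := by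
              rw [dotProduct_smul, smul_eq_mul, Matrix.dotProduct_mulVec]
          _ = a ⬝ᵥ (((Matrix.diagonal fun i => r i - ξ) * MY).det
                • ((((Matrix.diagonal fun i => r i - ξ) * MY))⁻¹ *ᵥ β)) := by rw [hsm]
          _ = ((Matrix.diagonal fun i => r i - ξ) * MY).det
                * (aY ⬝ᵥ ((Matrix.diagonal fun i => (r i - ξ)⁻¹) *ᵥ β)) := by
              rw [Matrix.mul_inv_rev, hRinv, ← Matrix.mulVec_mulVec, dotProduct_smul,
                smul_eq_mul, Matrix.dotProduct_mulVec, ← haY]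
          _ = (Matrix.diagonal fun i => r i - ξ).det * (DY * SS ξ) := by
              rw [Matrix.det_mul, hSS]
              have : aY ⬝ᵥ ((Matrix.diagonal fun i => (r i - ξ)⁻¹) *ᵥ β)
                  = ∑ i, aY i * ((r i - ξ)⁻¹ * β i) := by
                show ∑ i, aY i * ((Matrix.diagonal fun j => (r j - ξ)⁻¹) *ᵥ β) i = _
                exact Finset.sum_congr rfl fun i _ => by rw [Matrix.mulVec_diagonal]
              rw [this, ← hDY]
              ring
      have hPfac2 : (sProd r (ξ ::ₘ Y)).det
          = (Matrix.diagonal fun i => r i - ξ).det * (sProd r Y).det := by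
        rw [S15.sProd_cons, Matrix.det_mul]
      rw [hPfac2] at hstep2
      apply mul_left_cancel₀ hlam
      calc (Matrix.diagonal fun i => r i - ξ).det
            * (shsigma l r a β A B (ξ ::ₘ Y) * (sProd r Y).det)
          = shsigma l r a β A B (ξ ::ₘ Y)
              * ((Matrix.diagonal fun i => r i - ξ).det * (sProd r Y).det) := by ring
        _ = (Matrix.diagonal fun i => r i - ξ).det * (DY * SS ξ) := hstep2
    calc Gam Y X ξ * shtau l r A B (X.erase ξ).val * shsigma l r a β A B (ξ ::ₘ Y)
          * ((sProd r X.val).det * (sProd r Y).det)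
        = Gam Y X ξ * ((shtau l r A B (X.erase ξ).val * (sProd r X.val).det)
            * (shsigma l r a β A B (ξ ::ₘ Y) * (sProd r Y).det)) := by ring
      _ = Gam Y X ξ * ((DX + GG ξ) * (DY * SS ξ)) := by rw [hA', hB'']
  -- pointwise identity (PT)
  have hPT : ∀ i, β i * (DX * (S15.pp Y (r i) * (S15.pp X.val (r i))⁻¹)
        + ∑ m, gg m * ((S15.pp Y (r i) * (S15.pp X.val (r i))⁻¹
            - S15.pp Y (l m) * (S15.pp X.val (l m))⁻¹) * (l m - r i)⁻¹))
      = S15.pp Y (r i) * w i + ∑ m, B i m * (S15.pp Y (l m) * (A *ᵥ w) m) := by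
    intro i
    have hBe : ∀ m, B i m * (r i - l m) = β i * b m := by
      intro m
      have h0 := congrFun (congrFun hB i) m
      simp only [Matrix.sub_apply, Matrix.diagonal_mul, Matrix.mul_diagonal,
        Matrix.vecMulVec_apply] at h0
      linear_combination h0
    have hterm : ∀ m, β i * (gg m * ((S15.pp Y (r i) * (S15.pp X.val (r i))⁻¹
            - S15.pp Y (l m) * (S15.pp X.val (l m))⁻¹) * (l m - r i)⁻¹))
        = B i m * (S15.pp Y (l m) * (A *ᵥ w) m)
          - B i m * (S15.pp X.val (l m) * (A *ᵥ w) m)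
              * (S15.pp Y (r i) * (S15.pp X.val (r i))⁻¹) := by
      intro m
      have hlmri : l m - r i ≠ 0 := sub_ne_zero_of_ne (hlr m i)
      have hcan : (l m - r i) * (l m - r i)⁻¹ = 1 := mul_inv_cancel₀ hlmri
      have hBe' : β i * b m = -(B i m * (l m - r i)) := by
        rw [← hBe m]; ring
      have hzz : S15.pp X.val (l m) * (S15.pp Y (l m) * (S15.pp X.val (l m))⁻¹)
          = S15.pp Y (l m) := by
        rw [mul_comm (S15.pp X.val (l m)), mul_assoc, inv_mul_cancel₀ (hppXl m), mul_one]
      calc β i * (gg m * ((S15.pp Y (r i) * (S15.pp X.val (r i))⁻¹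
              - S15.pp Y (l m) * (S15.pp X.val (l m))⁻¹) * (l m - r i)⁻¹))
          = (β i * b m) * ((S15.pp X.val (l m) * (A *ᵥ w) m
              * (S15.pp Y (r i) * (S15.pp X.val (r i))⁻¹
                - S15.pp Y (l m) * (S15.pp X.val (l m))⁻¹)) * (l m - r i)⁻¹) := by
            rw [hgg]; ring
        _ = -(B i m) * (S15.pp X.val (l m) * (A *ᵥ w) m
              * (S15.pp Y (r i) * (S15.pp X.val (r i))⁻¹
                - S15.pp Y (l m) * (S15.pp X.val (l m))⁻¹))
              * ((l m - r i) * (l m - r i)⁻¹) := by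
            rw [hBe']; ring
        _ = -(B i m) * (S15.pp X.val (l m) * (A *ᵥ w) m
              * (S15.pp Y (r i) * (S15.pp X.val (r i))⁻¹
                - S15.pp Y (l m) * (S15.pp X.val (l m))⁻¹)) := by
            rw [hcan, mul_one]
        _ = B i m * ((S15.pp X.val (l m) * (S15.pp Y (l m) * (S15.pp X.val (l m))⁻¹))
                * (A *ᵥ w) m)
              - B i m * (S15.pp X.val (l m) * (A *ᵥ w) m)
                * (S15.pp Y (r i) * (S15.pp X.val (r i))⁻¹) := by ring
        _ = B i m * (S15.pp Y (l m) * (A *ᵥ w) m)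
              - B i m * (S15.pp X.val (l m) * (A *ᵥ w) m)
                * (S15.pp Y (r i) * (S15.pp X.val (r i))⁻¹) := by rw [hzz]
    have hy : S15.pp Y (r i) * (S15.pp X.val (r i))⁻¹ * S15.pp X.val (r i)
        = S15.pp Y (r i) := by
      rw [mul_assoc, inv_mul_cancel₀ (hppXr i), mul_one]
    calc β i * (DX * (S15.pp Y (r i) * (S15.pp X.val (r i))⁻¹)
            + ∑ m, gg m * ((S15.pp Y (r i) * (S15.pp X.val (r i))⁻¹
                - S15.pp Y (l m) * (S15.pp X.val (l m))⁻¹) * (l m - r i)⁻¹))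
        = β i * (DX * (S15.pp Y (r i) * (S15.pp X.val (r i))⁻¹))
            + ∑ m, β i * (gg m * ((S15.pp Y (r i) * (S15.pp X.val (r i))⁻¹
                - S15.pp Y (l m) * (S15.pp X.val (l m))⁻¹) * (l m - r i)⁻¹)) := by
          rw [mul_add, Finset.mul_sum]
      _ = β i * (DX * (S15.pp Y (r i) * (S15.pp X.val (r i))⁻¹))
            + (∑ m, B i m * (S15.pp Y (l m) * (A *ᵥ w) m)
              - (∑ m, B i m * (S15.pp X.val (l m) * (A *ᵥ w) m))
                  * (S15.pp Y (r i) * (S15.pp X.val (r i))⁻¹)) := by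
          rw [Finset.sum_congr rfl fun m _ => hterm m, Finset.sum_sub_distrib,
            ← Finset.sum_mul]
      _ = β i * (DX * (S15.pp Y (r i) * (S15.pp X.val (r i))⁻¹))
            + (∑ m, B i m * (S15.pp Y (l m) * (A *ᵥ w) m)
              - (DX * β i - S15.pp X.val (r i) * w i)
                  * (S15.pp Y (r i) * (S15.pp X.val (r i))⁻¹)) := by
          rw [hE1 i]
      _ = S15.pp Y (r i) * w i + ∑ m, B i m * (S15.pp Y (l m) * (A *ᵥ w) m) := by
          linear_combination (w i) * hy
  -- hin : the inner ξ-sum for each i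
  have hin : ∀ i, ∑ ξ ∈ X, Gam Y X ξ * ((DX + GG ξ) * (DY * (aY i * ((r i - ξ)⁻¹ * β i))))
      = DY * aY i * (β i * (DX * (S15.pp Y (r i) * (S15.pp X.val (r i))⁻¹)
          + ∑ m, gg m * ((S15.pp Y (r i) * (S15.pp X.val (r i))⁻¹
              - S15.pp Y (l m) * (S15.pp X.val (l m))⁻¹) * (l m - r i)⁻¹)))
        - DY * aY i * β i * dd * DX := by
    intro i
    have hL1i := S15.L1 X Y hcard (r i) (fun ξ hξ => hrXf ξ hξ i)
    have hsplit : ∀ ξ ∈ X, Gam Y X ξ * ((DX + GG ξ) * (DY * (aY i * ((r i - ξ)⁻¹ * β i))))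
        = (DY * aY i * β i * DX)
            * (S15.pp Y ξ * (∏ η ∈ X.erase ξ, (ξ - η))⁻¹ * (r i - ξ)⁻¹)
          + ∑ m, (DY * aY i * β i * gg m)
              * (S15.pp Y ξ * (∏ η ∈ X.erase ξ, (ξ - η))⁻¹ * ((l m - ξ)⁻¹ * (r i - ξ)⁻¹)) := by
      intro ξ hξ
      have hGam : Gam Y X ξ = S15.pp Y ξ * (∏ η ∈ X.erase ξ, (ξ - η))⁻¹ := by
        rw [Gam, div_eq_mul_inv]; rfl
      rw [hGam, hGG]
      rw [show (DX + ∑ m, gg m * (l m - ξ)⁻¹) * (DY * (aY i * ((r i - ξ)⁻¹ * β i)))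
          = DX * (DY * (aY i * ((r i - ξ)⁻¹ * β i)))
            + ∑ m, gg m * (l m - ξ)⁻¹ * (DY * (aY i * ((r i - ξ)⁻¹ * β i)))
        from by rw [add_mul, Finset.sum_mul]]
      rw [mul_add, Finset.mul_sum]
      congr 1
      · ring
      · exact Finset.sum_congr rfl fun m _ => by ring
    rw [Finset.sum_congr rfl hsplit, Finset.sum_add_distrib, ← Finset.mul_sum, hL1i,
      Finset.sum_comm]
    have hswap : ∀ m, ∑ ξ ∈ X, (DY * aY i * β i * gg m)
        * (S15.pp Y ξ * (∏ η ∈ X.erase ξ, (ξ - η))⁻¹ * ((l m - ξ)⁻¹ * (r i - ξ)⁻¹))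
        = (DY * aY i * β i * gg m)
            * ((S15.pp Y (r i) * (S15.pp X.val (r i))⁻¹
                - S15.pp Y (l m) * (S15.pp X.val (l m))⁻¹) * (l m - r i)⁻¹) := by
      intro m
      rw [← Finset.mul_sum, S15.L2 X Y hcard (r i) (l m) (fun ξ hξ => hrXf ξ hξ i)
        (fun ξ hξ => hlXf ξ hξ m) (sub_ne_zero_of_ne (hlr m i))]
    rw [Finset.sum_congr rfl fun m _ => hswap m]
    have hfac : ∀ m : Fin n, (DY * aY i * β i * gg m)
        * ((S15.pp Y (r i) * (S15.pp X.val (r i))⁻¹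
            - S15.pp Y (l m) * (S15.pp X.val (l m))⁻¹) * (l m - r i)⁻¹)
        = (DY * aY i * β i) * (gg m * ((S15.pp Y (r i) * (S15.pp X.val (r i))⁻¹
            - S15.pp Y (l m) * (S15.pp X.val (l m))⁻¹) * (l m - r i)⁻¹)) := fun m => by ring
    rw [Finset.sum_congr rfl fun m _ => hfac m, ← Finset.mul_sum]
    rw [show β i * (DX * (S15.pp Y (r i) * (S15.pp X.val (r i))⁻¹)
          + ∑ m, gg m * ((S15.pp Y (r i) * (S15.pp X.val (r i))⁻¹
              - S15.pp Y (l m) * (S15.pp X.val (l m))⁻¹) * (l m - r i)⁻¹))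
        = β i * (DX * (S15.pp Y (r i) * (S15.pp X.val (r i))⁻¹))
          + β i * ∑ m, gg m * ((S15.pp Y (r i) * (S15.pp X.val (r i))⁻¹
              - S15.pp Y (l m) * (S15.pp X.val (l m))⁻¹) * (l m - r i)⁻¹) from by ring]
    ring
  -- core identity
  have hMYw : ∀ i, (MY *ᵥ w) i
      = S15.pp Y (r i) * w i + ∑ m, B i m * (S15.pp Y (l m) * (A *ᵥ w) m) := by
    intro i
    have hMc : MY = sProd r Y + B * sProd l Y * A := rfl
    rw [hMc, Matrix.add_mulVec]
    have h1 : ((B * sProd l Y * A) *ᵥ w) i = ∑ m, B i m * (S15.pp Y (l m) * (A *ᵥ w) m) := by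
      rw [Matrix.mul_assoc, ← Matrix.mulVec_mulVec, ← Matrix.mulVec_mulVec]
      show ∑ m, B i m * ((sProd l Y *ᵥ (A *ᵥ w)) m) = _
      refine Finset.sum_congr rfl fun m _ => ?_
      rw [S15.sProd_eq, Matrix.mulVec_diagonal]
    have h2 : (sProd r Y *ᵥ w) i = S15.pp Y (r i) * w i := by
      rw [S15.sProd_eq, Matrix.mulVec_diagonal]
    simp only [Pi.add_apply]
    rw [h1, h2]
  have hfin : aY ⬝ᵥ (MY *ᵥ w) = a ⬝ᵥ w := by
    rw [Matrix.dotProduct_mulVec, haY, Matrix.vecMul_vecMul, Matrix.nonsing_inv_mul _ hMYu,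
      Matrix.vecMul_one]
  have hcore : ∑ ξ ∈ X, Gam Y X ξ * ((DX + GG ξ) * (DY * SS ξ))
      = (a ⬝ᵥ w) * DY - dd * DX * (DY * (aY ⬝ᵥ β)) := by
    have hexp : ∀ ξ ∈ X, Gam Y X ξ * ((DX + GG ξ) * (DY * SS ξ))
        = ∑ i, Gam Y X ξ * ((DX + GG ξ) * (DY * (aY i * ((r i - ξ)⁻¹ * β i)))) := by
      intro ξ hξ
      rw [hSS]
      simp only [Finset.mul_sum]
    rw [Finset.sum_congr rfl hexp, Finset.sum_comm]
    rw [Finset.sum_congr rfl fun i (_ : i ∈ Finset.univ) => hin i]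
    rw [Finset.sum_sub_distrib]
    have h5 : ∑ i, DY * aY i * (β i * (DX * (S15.pp Y (r i) * (S15.pp X.val (r i))⁻¹)
          + ∑ m, gg m * ((S15.pp Y (r i) * (S15.pp X.val (r i))⁻¹
              - S15.pp Y (l m) * (S15.pp X.val (l m))⁻¹) * (l m - r i)⁻¹)))
        = DY * (a ⬝ᵥ w) := by
      rw [show DY * (a ⬝ᵥ w) = DY * (aY ⬝ᵥ (MY *ᵥ w)) from by rw [hfin]]
      rw [show aY ⬝ᵥ (MY *ᵥ w) = ∑ i, aY i * (MY *ᵥ w) i from rfl, Finset.mul_sum]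
      refine Finset.sum_congr rfl fun i _ => ?_
      rw [hMYw i, ← hPT i]
      ring
    have h6 : ∑ i, DY * aY i * β i * dd * DX = dd * DX * (DY * (aY ⬝ᵥ β)) := by
      rw [show aY ⬝ᵥ β = ∑ i, aY i * β i from rfl, Finset.mul_sum, Finset.mul_sum]
      exact Finset.sum_congr rfl fun i _ => by ring
    rw [h5, h6]
    ring
  -- reductions of the right-hand side
  have htX : shtau l r A B X.val * (sProd r X.val).det = DX := (S15.Mc_det hPX).symm
  have htY : shtau l r A B Y * (sProd r Y).det = DY := (S15.Mc_det hPY).symm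
  have hsX : shsigma l r a β A B X.val * (sProd r X.val).det = a ⬝ᵥ w := by
    rw [S15.shsigma_eq hPX]
    calc shtau l r A B X.val * (a ᵥ* MX⁻¹ ⬝ᵥ β) * (sProd r X.val).det
        = (shtau l r A B X.val * (sProd r X.val).det) * (a ᵥ* MX⁻¹ ⬝ᵥ β) := by ring
      _ = DX * (a ᵥ* MX⁻¹ ⬝ᵥ β) := by rw [htX]
      _ = a ⬝ᵥ w := by
          rw [hww, dotProduct_smul, smul_eq_mul, Matrix.dotProduct_mulVec]
  have hsY : shsigma l r a β A B Y * (sProd r Y).det = DY * (aY ⬝ᵥ β) := by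
    rw [S15.shsigma_eq hPY]
    calc shtau l r A B Y * (a ᵥ* MY⁻¹ ⬝ᵥ β) * (sProd r Y).det
        = (shtau l r A B Y * (sProd r Y).det) * (a ᵥ* MY⁻¹ ⬝ᵥ β) := by ring
      _ = DY * (a ᵥ* MY⁻¹ ⬝ᵥ β) := by rw [htY]
      _ = DY * (aY ⬝ᵥ β) := by rw [← haY]
  -- final assembly
  refine mul_right_cancel₀ (mul_ne_zero hdPX hdPY) ?_
  calc (∑ ξ ∈ X, Gam Y X ξ * shtau l r A B (X.erase ξ).val * shsigma l r a β A B (ξ ::ₘ Y))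
        * ((sProd r X.val).det * (sProd r Y).det)
      = ∑ ξ ∈ X, Gam Y X ξ * shtau l r A B (X.erase ξ).val * shsigma l r a β A B (ξ ::ₘ Y)
          * ((sProd r X.val).det * (sProd r Y).det) := by rw [Finset.sum_mul]
    _ = ∑ ξ ∈ X, Gam Y X ξ * ((DX + GG ξ) * (DY * SS ξ)) :=
        Finset.sum_congr rfl hstep
    _ = (a ⬝ᵥ w) * DY - dd * DX * (DY * (aY ⬝ᵥ β)) := hcore
    _ = (shsigma l r a β A B X.val * shtau l r A B Y
          - dd * shtau l r A B X.val * shsigma l r a β A B Y)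
        * ((sProd r X.val).det * (sProd r Y).det) := by
        rw [show (shsigma l r a β A B X.val * shtau l r A B Y
              - dd * shtau l r A B X.val * shsigma l r a β A B Y)
              * ((sProd r X.val).det * (sProd r Y).det)
            = (shsigma l r a β A B X.val * (sProd r X.val).det)
                * (shtau l r A B Y * (sProd r Y).det)
              - dd * ((shtau l r A B X.val * (sProd r X.val).det)
                * (shsigma l r a β A B Y * (sProd r Y).det)) from by ring]
        rw [hsX, htY, htX, hsY]
        ring
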